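/- Let ω be values on unordered pairs of a finite set T defined from a graph (T,S) with anticlique clutter 𝒦 satisfying condition (kc) by: ω(u,v)=1 if (u,v)∈S; ω(u,v)=1/2 if the pair {u,v} is contained in exactly one member of 𝒦; ω(u,v)=0 if {u,v} is contained in at least two members of 𝒦. Then ω is a metric on T (i.e., it satisfies the triangle inequality and ω(u,u)=0, with symmetry). -/

import Mathlib

/-- If 𝒦 is the anticlique clutter of a graph (T,S) satisfying condition (kc),
then ω (1 on edges, 1/2 on pairs covered by exactly one anticlique,
0 on pairs covered by at least two) is a metric on T. -/
theorem stmt_8 {T : Type*} [Fintype T]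
    (S : T → T → Prop) (hSsym : ∀ u v, S u v → S v u) (hSirr : ∀ u, ¬ S u u)
    (𝒦 : Set (Set T))
    (h𝒦 : ∀ A : Set T, A ∈ 𝒦 ↔
      ((∀ u ∈ A, ∀ v ∈ A, ¬ S u v) ∧
       ∀ B : Set T, (∀ u ∈ B, ∀ v ∈ B, ¬ S u v) → A ⊆ B → A = B))
    (hkc : ∀ A B C, A ∈ 𝒦 → B ∈ 𝒦 → C ∈ 𝒦 → A ≠ B → A ≠ C → B ≠ C →
      (A ∩ B).Nonempty → (A ∩ C).Nonempty → (B ∩ C).Nonempty →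
      A ∩ B = A ∩ C ∧ A ∩ C = B ∩ C)
    (ω : T → T → ℚ)
    (hdiag : ∀ u, ω u u = 0)
    (hωS : ∀ u v, S u v → ω u v = 1)
    (hω1 : ∀ u v, u ≠ v →
      (∃! A, A ∈ 𝒦 ∧ u ∈ A ∧ v ∈ A) → ω u v = 1/2)
    (hω0 : ∀ u v, u ≠ v →
      (∃ A B, A ∈ 𝒦 ∧ B ∈ 𝒦 ∧ A ≠ B ∧ u ∈ A ∧ v ∈ A ∧ u ∈ B ∧ v ∈ B) →
      ω u v = 0) :
    (∀ u, ω u u = 0) ∧ (∀ u v, ω u v = ω v u) ∧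
      (∀ u v w, ω u w ≤ ω u v + ω v w) := by
  classical
  -- Every non-edge pair is contained in some anticlique.
  have hstab : ∀ u v : T, ¬ S u v → ∃ A ∈ 𝒦, u ∈ A ∧ v ∈ A := by
    intro u v hS
    have hpair : ∀ x ∈ ({u, v} : Set T), ∀ y ∈ ({u, v} : Set T), ¬ S x y := by
      intro x hx y hy
      simp only [Set.mem_insert_iff, Set.mem_singleton_iff] at hx hy
      rcases hx with rfl | rfl <;> rcases hy with rfl | rfl <;>
        first
          | exact hSirr _
          | exact hS
          | exact fun h => hS (hSsym _ _ h)
    set F : Set (Set T) :=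
      {B : Set T | (∀ x ∈ B, ∀ y ∈ B, ¬ S x y) ∧ u ∈ B ∧ v ∈ B} with hF
    have hFne : F.Nonempty :=
      ⟨({u, v} : Set T), hpair, Set.mem_insert _ _,
        Set.mem_insert_of_mem _ rfl⟩
    obtain ⟨A, hAF, hmax⟩ := (Set.toFinite F).exists_maximalFor id F hFne
    refine ⟨A, ?_, hAF.2.1, hAF.2.2⟩
    rw [h𝒦]
    refine ⟨hAF.1, fun B hBst hAB => ?_⟩
    exact le_antisymm hAB (hmax ⟨hBst, hAB hAF.2.1, hAB hAF.2.2⟩ hAB)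
  -- Key consequence of (kc): if {u,v} lies in two anticliques, then every
  -- anticlique containing v contains u.
  have hkey : ∀ (u v : T) (A B : Set T), A ∈ 𝒦 → B ∈ 𝒦 → A ≠ B →
      u ∈ A → u ∈ B → v ∈ A → v ∈ B → ∀ E ∈ 𝒦, v ∈ E → u ∈ E := by
    intro u v A B hA hB hAB huA huB hvA hvB E hE hvE
    by_cases hEA : E = A
    · exact hEA ▸ huA
    by_cases hEB : E = B
    · exact hEB ▸ huB
    have h := hkc A B E hA hB hE hAB (fun h => hEA h.symm) (fun h => hEB h.symm)
      ⟨v, hvA, hvB⟩ ⟨v, hvA, hvE⟩ ⟨v, hvB, hvE⟩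
    have huAB : u ∈ A ∩ B := ⟨huA, huB⟩
    rw [h.1] at huAB
    exact huAB.2
  -- If a pair is covered by some anticlique, its weight is at most 1/2.
  have hle_half : ∀ u w : T, u ≠ w → (∃ C ∈ 𝒦, u ∈ C ∧ w ∈ C) →
      ω u w ≤ 1/2 := by
    rintro u w huw ⟨C, hC, huC, hwC⟩
    by_cases h2 : ∃ B ∈ 𝒦, B ≠ C ∧ u ∈ B ∧ w ∈ B
    · obtain ⟨B, hB, hBC, huB, hwB⟩ := h2
      rw [hω0 u w huw ⟨B, C, hB, hC, hBC, huB, hwB, huC, hwC⟩]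
      norm_num
    · have huniq : ∀ B, B ∈ 𝒦 ∧ u ∈ B ∧ w ∈ B → B = C := fun B hB =>
        Classical.byContradiction fun hne => h2 ⟨B, hB.1, hne, hB.2⟩
      rw [hω1 u w huw ⟨C, ⟨hC, huC, hwC⟩, huniq⟩]
  -- Trichotomy of values.
  have hvals : ∀ u v : T, ω u v = 0 ∨ ω u v = 1/2 ∨ ω u v = 1 := by
    intro u v
    by_cases huv : u = v
    · exact Or.inl (huv ▸ hdiag u)
    by_cases hS : S u v
    · exact Or.inr (Or.inr (hωS u v hS))
    obtain ⟨A, hA, hu, hv⟩ := hstab u v hS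
    by_cases h2 : ∃ B ∈ 𝒦, B ≠ A ∧ u ∈ B ∧ v ∈ B
    · obtain ⟨B, hB, hBA, huB, hvB⟩ := h2
      exact Or.inl (hω0 u v huv ⟨B, A, hB, hA, hBA, huB, hvB, hu, hv⟩)
    · have huniq : ∀ B, B ∈ 𝒦 ∧ u ∈ B ∧ v ∈ B → B = A := fun B hB =>
        Classical.byContradiction fun hne => h2 ⟨B, hB.1, hne, hB.2⟩
      exact Or.inr (Or.inl (hω1 u v huv ⟨A, ⟨hA, hu, hv⟩, huniq⟩))
  have hle_one : ∀ u v : T, ω u v ≤ 1 := by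
    intro u v
    rcases hvals u v with h | h | h <;> rw [h] <;> norm_num
  have hnonneg : ∀ u v : T, 0 ≤ ω u v := by
    intro u v
    rcases hvals u v with h | h | h <;> rw [h] <;> norm_num
  -- Converse extraction lemmas.
  have hzero : ∀ u v : T, u ≠ v → ω u v = 0 →
      ∃ A B, A ∈ 𝒦 ∧ B ∈ 𝒦 ∧ A ≠ B ∧ u ∈ A ∧ v ∈ A ∧ u ∈ B ∧ v ∈ B := by
    intro u v huv h0
    by_cases hS : S u v
    · rw [hωS u v hS] at h0; norm_num at h0
    obtain ⟨A, hA, hu, hv⟩ := hstab u v hS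
    by_cases h2 : ∃ B ∈ 𝒦, B ≠ A ∧ u ∈ B ∧ v ∈ B
    · obtain ⟨B, hB, hBA, huB, hvB⟩ := h2
      exact ⟨B, A, hB, hA, hBA, huB, hvB, hu, hv⟩
    · have huniq : ∀ B, B ∈ 𝒦 ∧ u ∈ B ∧ v ∈ B → B = A := fun B hB =>
        Classical.byContradiction fun hne => h2 ⟨B, hB.1, hne, hB.2⟩
      rw [hω1 u v huv ⟨A, ⟨hA, hu, hv⟩, huniq⟩] at h0
      norm_num at h0
  have hhalf : ∀ u v : T, u ≠ v → ω u v = 1/2 →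
      ∃ A, A ∈ 𝒦 ∧ u ∈ A ∧ v ∈ A := by
    intro u v huv hh
    by_cases hS : S u v
    · rw [hωS u v hS] at hh; norm_num at hh
    exact (hstab u v hS).imp fun A ⟨hA, h1, h2⟩ => ⟨hA, h1, h2⟩
  refine ⟨hdiag, ?_, ?_⟩
  · -- symmetry
    intro u v
    by_cases huv : u = v
    · rw [huv]
    by_cases hS : S u v
    · rw [hωS u v hS, hωS v u (hSsym _ _ hS)]
    obtain ⟨A, hA, hu, hv⟩ := hstab u v hS
    by_cases h2 : ∃ B ∈ 𝒦, B ≠ A ∧ u ∈ B ∧ v ∈ B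
    · obtain ⟨B, hB, hBA, huB, hvB⟩ := h2
      rw [hω0 u v huv ⟨B, A, hB, hA, hBA, huB, hvB, hu, hv⟩,
        hω0 v u (Ne.symm huv) ⟨B, A, hB, hA, hBA, hvB, huB, hv, hu⟩]
    · have huniq : ∀ B, B ∈ 𝒦 ∧ u ∈ B ∧ v ∈ B → B = A := fun B hB =>
        Classical.byContradiction fun hne => h2 ⟨B, hB.1, hne, hB.2⟩
      rw [hω1 u v huv ⟨A, ⟨hA, hu, hv⟩, huniq⟩,
        hω1 v u (Ne.symm huv)
          ⟨A, ⟨hA, hv, hu⟩, fun B hB => huniq B ⟨hB.1, hB.2.2, hB.2.1⟩⟩]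
  · -- triangle inequality
    intro u v w
    by_cases huv : u = v
    · subst huv; rw [hdiag, zero_add]
    by_cases hvw : v = w
    · subst hvw; rw [hdiag, add_zero]
    by_cases huw : u = w
    · subst huw; rw [hdiag]; exact add_nonneg (hnonneg u v) (hnonneg v u)
    rcases hvals u v with h1 | h1 | h1 <;> rcases hvals v w with h2 | h2 | h2
    · -- 0 + 0
      obtain ⟨A, B, hA, hB, hAB, huA, hvA, huB, hvB⟩ := hzero u v huv h1
      obtain ⟨C, D, hC, hD, hCD, hvC, hwC, hvD, hwD⟩ := hzero v w hvw h2
      have huC := hkey u v A B hA hB hAB huA huB hvA hvB C hC hvC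
      have huD := hkey u v A B hA hB hAB huA huB hvA hvB D hD hvD
      rw [hω0 u w huw ⟨C, D, hC, hD, hCD, huC, hwC, huD, hwD⟩, h1, h2]
      norm_num
    · -- 0 + 1/2
      obtain ⟨A, B, hA, hB, hAB, huA, hvA, huB, hvB⟩ := hzero u v huv h1
      obtain ⟨C, hC, hvC, hwC⟩ := hhalf v w hvw h2
      have huC := hkey u v A B hA hB hAB huA huB hvA hvB C hC hvC
      have := hle_half u w huw ⟨C, hC, huC, hwC⟩
      rw [h1, h2]; linarith
    · rw [h1, h2]; linarith [hle_one u w]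
    · -- 1/2 + 0
      obtain ⟨A, hA, huA, hvA⟩ := hhalf u v huv h1
      obtain ⟨C, D, hC, hD, hCD, hvC, hwC, hvD, hwD⟩ := hzero v w hvw h2
      have hwA := hkey w v C D hC hD hCD hwC hwD hvC hvD A hA hvA
      have := hle_half u w huw ⟨A, hA, huA, hwA⟩
      rw [h1, h2]; linarith
    · rw [h1, h2]; linarith [hle_one u w]
    · rw [h1, h2]; linarith [hle_one u w]
    · rw [h1, h2]; linarith [hle_one u w]
    · rw [h1, h2]; linarith [hle_one u w]
    · rw [h1, h2]; linarith [hle_one u w]
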